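/- Let (μ, P, H) be an admissible triple in ℝ³ whose support is contained in the closed unit ball, such that H is perpendicular, i.e. (P x)(H x) = 0 for μ-a.e. x. If equality ∫ |H|² dμ = μ(ℝ³) holds, then supp μ is contained in the unit sphere S² = {x : |x| = 1} and for μ-a.e. x one has |x| = 1, (P x) x = 0 and H x = −x; in particular |H x| = 1 μ-a.e. -/

import Mathlib

open MeasureTheory Metric Filter
open scoped RealInnerProductSpace ENNReal

noncomputable section

/-- Euclidean three-space. -/
abbrev E3 : Type := EuclideanSpace ℝ (Fin 3)

/-- The support of a measure: points all of whose neighbourhoods have positive measure. -/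
def mSupport (μ : Measure E3) : Set E3 := {x | ∀ r > 0, 0 < μ (ball x r)}

/-- An admissible triple `(μ, P, H)`: a finite compactly supported Borel measure, a measurable
family of maps which μ-a.e. are orthogonal projections onto 2-dimensional planes (idempotent,
symmetric, of rank two), and an `L²(μ)` generalized mean curvature `H` satisfying the first
variation identity `∫ trace(P x ∘ DX x) dμ = -2 ∫ ⟨X x, H x⟩ dμ` for every compactly supported
`C¹` vector field `X`. -/
structure IsAdmissible (μ : Measure E3) (P : E3 → E3 →L[ℝ] E3) (H : E3 → E3) : Prop where
  finite : IsFiniteMeasure μ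
  compact_support : IsCompact (mSupport μ)
  meas_P : ∀ v : E3, Measurable fun x => P x v
  meas_H : AEStronglyMeasurable H μ
  proj_ae : ∀ᵐ x ∂μ, (P x).comp (P x) = P x ∧
      (∀ u v : E3, ⟪P x u, v⟫ = ⟪u, P x v⟫) ∧
      Module.finrank ℝ (LinearMap.range ((P x : E3 →ₗ[ℝ] E3))) = 2
  memL2 : MemLp H 2 μ
  first_variation : ∀ X : E3 → E3, ContDiff ℝ 1 X → HasCompactSupport X →
      ∫ x, LinearMap.trace ℝ E3 ((P x).comp (fderiv ℝ X x) : E3 →ₗ[ℝ] E3) ∂μ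
        = -2 * ∫ x, ⟪X x, H x⟫ ∂μ

/-- The generalized mean curvature is perpendicular: `(P x) (H x) = 0` for μ-a.e. `x`. -/
def IsPerp (μ : Measure E3) (P : E3 → E3 →L[ℝ] E3) (H : E3 → E3) : Prop :=
  ∀ᵐ x ∂μ, P x (H x) = 0

/-- The Willmore energy of an admissible triple. -/
def Willmore (μ : Measure E3) (H : E3 → E3) : ℝ := ∫ x, ‖H x‖ ^ 2 ∂μ

/-- The mass of a measure. -/
def Mass (μ : Measure E3) : ℝ := (μ Set.univ).toReal

/-- Almost every point lies in the support of the measure. -/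
lemma ae_mem_mSupport (μ : Measure E3) : ∀ᵐ x ∂μ, x ∈ mSupport μ := by
  set ι := {p : E3 × ℝ // μ (ball p.1 p.2) = 0} with hι
  have hcover : (mSupport μ)ᶜ ⊆ ⋃ i : ι, ball i.1.1 i.1.2 := by
    intro x hx
    simp only [mSupport, Set.mem_compl_iff, Set.mem_setOf_eq, not_forall] at hx
    obtain ⟨r, hr, hr0⟩ := hx
    rw [not_lt, le_zero_iff] at hr0
    exact Set.mem_iUnion.2 ⟨⟨(x, r), hr0⟩, mem_ball_self hr⟩
  obtain ⟨T, hT, hTeq⟩ := TopologicalSpace.isOpen_iUnion_countable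
    (fun i : ι => ball i.1.1 i.1.2) (fun i => isOpen_ball)
  have hnull : μ (⋃ i : ι, ball i.1.1 i.1.2) = 0 := by
    rw [← hTeq]
    exact (measure_biUnion_null_iff hT).2 fun i _ => i.2
  rw [ae_iff]
  exact measure_mono_null hcover hnull

/-- The trace of an idempotent with rank-two range is `2`. -/
lemma trace_proj (f : E3 →L[ℝ] E3) (hf : f.comp f = f)
    (hr : Module.finrank ℝ (LinearMap.range ((f : E3 →ₗ[ℝ] E3))) = 2) :
    LinearMap.trace ℝ E3 (f : E3 →ₗ[ℝ] E3) = 2 := by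
  have hproj : LinearMap.IsProj (LinearMap.range ((f : E3 →ₗ[ℝ] E3))) (f : E3 →ₗ[ℝ] E3) := by
    constructor
    · intro x; exact LinearMap.mem_range_self _ x
    · rintro x ⟨y, rfl⟩
      have := congrArg (fun g : E3 →L[ℝ] E3 => g y) hf
      simpa using this
  rw [hproj.trace, hr]; norm_num

/-- A smooth bump equal to `1` on the ball of radius `2`, supported in the ball of radius `3`. -/
def bump : ContDiffBump (0 : E3) := ⟨2, 3, by norm_num, by norm_num⟩

/-- A compactly supported vector field equal to the identity near the unit ball. -/
def Xfield : E3 → E3 := fun y => bump y • y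

lemma Xfield_contDiff : ContDiff ℝ 1 Xfield :=
  bump.contDiff.smul contDiff_id

lemma Xfield_compactSupport : HasCompactSupport Xfield := by
  apply HasCompactSupport.intro (isCompact_closedBall (0:E3) 3)
  intro x hx
  have : bump x = 0 := by
    have := bump.support_eq
    by_contra h
    exact hx (ball_subset_closedBall (this ▸ Function.mem_support.2 h))
  simp [Xfield, this]

lemma Xfield_eq (x : E3) (hx : x ∈ closedBall (0:E3) 1) : Xfield x = x := by
  have h1 : bump x = 1 := bump.one_of_mem_closedBall
    (closedBall_subset_closedBall (by rw [show bump.rIn = 2 from rfl]; norm_num) hx)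
  simp [Xfield, h1]

lemma Xfield_fderiv (x : E3) (hx : x ∈ closedBall (0:E3) 1) :
    fderiv ℝ Xfield x = ContinuousLinearMap.id ℝ E3 := by
  have hmem : x ∈ ball (0:E3) 2 := lt_of_le_of_lt (mem_closedBall.1 hx) (by norm_num)
  have hEq : Xfield =ᶠ[nhds x] id := by
    filter_upwards [isOpen_ball.mem_nhds hmem] with y hy
    have h1 : bump y = 1 := bump.one_of_mem_closedBall (ball_subset_closedBall hy)
    simp [Xfield, h1]
  rw [hEq.fderiv_eq, fderiv_id]

/-- equality analysis in the Willmore-vs-Area theorem. If the support of an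
admissible triple with perpendicular mean curvature lies in the closed unit ball and
`∫ |H|² dμ = μ(ℝ³)`, then the support lies on the unit sphere and μ-a.e. `|x| = 1`,
`(P x) x = 0`, `H x = -x`; in particular `|H x| = 1` μ-a.e. -/
theorem willmore_vs_area_equality (μ : Measure E3) (P : E3 → E3 →L[ℝ] E3) (H : E3 → E3)
    (hadm : IsAdmissible μ P H) (hsupp : mSupport μ ⊆ closedBall 0 1)
    (hperp : IsPerp μ P H) (heq : Willmore μ H = Mass μ) :
    mSupport μ ⊆ sphere (0 : E3) 1 ∧
      ∀ᵐ x ∂μ, ‖x‖ = 1 ∧ P x x = 0 ∧ H x = -x ∧ ‖H x‖ = 1 := by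
  haveI hfin : IsFiniteMeasure μ := hadm.finite
  have hball : ∀ᵐ x ∂μ, ‖x‖ ≤ 1 := by
    filter_upwards [ae_mem_mSupport μ] with x hx
    simpa [mem_closedBall, dist_zero_right] using hsupp hx
  -- First variation applied to the (cut-off) position vector field
  have hfv := hadm.first_variation Xfield Xfield_contDiff Xfield_compactSupport
  have hL : ∫ x, LinearMap.trace ℝ E3 ((P x).comp (fderiv ℝ Xfield x) : E3 →ₗ[ℝ] E3) ∂μ
      = 2 * Mass μ := by
    rw [show (2:ℝ) * Mass μ = ∫ _x, (2:ℝ) ∂μ by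
      rw [integral_const]; simp [Mass, mul_comm, Measure.real]]
    apply integral_congr_ae
    filter_upwards [hball, hadm.proj_ae] with x hx hproj
    obtain ⟨h1, -, h3⟩ := hproj
    rw [Xfield_fderiv x (by simpa [mem_closedBall, dist_zero_right] using hx),
        ContinuousLinearMap.comp_id]
    exact trace_proj (P x) h1 h3
  have hXeq : ∫ x, ⟪Xfield x, H x⟫ ∂μ = ∫ x, ⟪x, H x⟫ ∂μ := by
    apply integral_congr_ae
    filter_upwards [hball] with x hx
    rw [Xfield_eq x (by simpa [mem_closedBall, dist_zero_right] using hx)]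
  have hinner : ∫ x, ⟪x, H x⟫ ∂μ = - Mass μ := by
    rw [hXeq, hL] at hfv; linarith
  -- Integrability facts
  have hHsm := hadm.meas_H
  have hH1 : Integrable H μ := hadm.memL2.integrable one_le_two
  have hInnerInt : Integrable (fun x => ⟪x, H x⟫) μ := by
    apply hH1.norm.mono' (AEStronglyMeasurable.inner aestronglyMeasurable_id hHsm)
    filter_upwards [hball] with x hx
    calc ‖⟪x, H x⟫‖ ≤ ‖x‖ * ‖H x‖ := norm_inner_le_norm _ _
      _ ≤ 1 * ‖H x‖ := by gcongr
      _ = ‖H x‖ := one_mul _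
  have hHsq : Integrable (fun x => ‖H x‖ ^ 2) μ :=
    (memLp_two_iff_integrable_sq_norm hHsm).1 hadm.memL2
  have hxsqm : AEStronglyMeasurable (fun x : E3 => ‖x‖ ^ 2) μ :=
    (continuous_norm.pow 2).aestronglyMeasurable
  have hxsq : Integrable (fun x : E3 => ‖x‖ ^ 2) μ := by
    apply (integrable_const (1:ℝ)).mono' hxsqm
    filter_upwards [hball] with x hx
    rw [Real.norm_eq_abs, abs_of_nonneg (sq_nonneg _)]
    nlinarith [norm_nonneg x]
  have hxL2 : MemLp (fun x : E3 => x) 2 μ :=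
    (memLp_top_of_bound aestronglyMeasurable_id 1 hball).mono_exponent le_top
  have hA : Integrable (fun x => ‖H x + x‖ ^ 2) μ :=
    (memLp_two_iff_integrable_sq_norm (hHsm.add aestronglyMeasurable_id)).1
      (hadm.memL2.add hxL2)
  -- Expand the square
  have hexp : (fun x : E3 => ‖H x + x‖ ^ 2)
      = fun x => ‖H x‖ ^ 2 + 2 * ⟪x, H x⟫ + ‖x‖ ^ 2 := by
    funext x
    rw [norm_add_sq_real, real_inner_comm]
  have hsplit : ∫ x, ‖H x + x‖ ^ 2 ∂μ
      = Willmore μ H + 2 * ∫ x, ⟪x, H x⟫ ∂μ + ∫ x, ‖x‖ ^ 2 ∂μ := by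
    have i1 : Integrable (fun x => ‖H x‖ ^ 2 + 2 * ⟪x, H x⟫) μ :=
      hHsq.add (hInnerInt.const_mul 2)
    rw [hexp, integral_add i1 hxsq, integral_add hHsq (hInnerInt.const_mul 2),
      integral_const_mul]
    rfl
  have hone : ∫ _x, (1:ℝ) ∂μ = Mass μ := by rw [integral_const]; simp [Mass, Measure.real]
  have hsum : ∫ x, ‖H x + x‖ ^ 2 ∂μ + ∫ x, (1 - ‖x‖ ^ 2) ∂μ = 0 := by
    rw [hsplit, hinner, integral_sub (integrable_const 1) hxsq, hone]
    rw [heq]; ring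
  have hA0 : 0 ≤ ∫ x, ‖H x + x‖ ^ 2 ∂μ := integral_nonneg fun x => sq_nonneg _
  have hB0 : 0 ≤ ∫ x, (1 - ‖x‖ ^ 2) ∂μ := by
    apply integral_nonneg_of_ae
    filter_upwards [hball] with x hx
    simp only [Pi.zero_apply]
    nlinarith [norm_nonneg x]
  have hAz : ∫ x, ‖H x + x‖ ^ 2 ∂μ = 0 := by linarith
  have hBz : ∫ x, (1 - ‖x‖ ^ 2) ∂μ = 0 := by linarith
  have haeA : ∀ᵐ x ∂μ, ‖H x + x‖ ^ 2 = 0 := by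
    have := (integral_eq_zero_iff_of_nonneg (fun x => sq_nonneg _) hA).1 hAz
    filter_upwards [this] with x hx using hx
  have haeB : ∀ᵐ x ∂μ, (1:ℝ) - ‖x‖ ^ 2 = 0 := by
    have hnn : 0 ≤ᵐ[μ] fun x : E3 => 1 - ‖x‖ ^ 2 := by
      filter_upwards [hball] with x hx
      simp only [Pi.zero_apply]
      nlinarith [norm_nonneg x]
    have := (integral_eq_zero_iff_of_nonneg_ae hnn ((integrable_const 1).sub hxsq)).1 hBz
    filter_upwards [this] with x hx using hx
  have hmain : ∀ᵐ x ∂μ, ‖x‖ = 1 ∧ P x x = 0 ∧ H x = -x ∧ ‖H x‖ = 1 := by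
    filter_upwards [haeA, haeB, hperp] with x h1 h2 h3
    have hn : ‖x‖ = 1 := by nlinarith [norm_nonneg x]
    have hadd : H x + x = 0 := by
      have := sq_eq_zero_iff.1 h1
      exact norm_eq_zero.1 this
    have hHx : H x = -x := eq_neg_of_add_eq_zero_left hadd
    refine ⟨hn, ?_, hHx, by rw [hHx, norm_neg, hn]⟩
    have hPx : P x x = -(P x (H x)) := by rw [hHx]; simp
    rw [hPx, h3, neg_zero]
  refine ⟨?_, hmain⟩
  intro x hx
  have hle : ‖x‖ ≤ 1 := by
    simpa [mem_closedBall, dist_zero_right] using hsupp hx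
  rw [mem_sphere_zero_iff_norm]
  by_contra hne
  have hlt : ‖x‖ < 1 := lt_of_le_of_ne hle hne
  have hpos := hx (1 - ‖x‖) (by linarith)
  have hnull : μ (ball x (1 - ‖x‖)) = 0 := by
    have h1 : ∀ᵐ y ∂μ, ‖y‖ = 1 := hmain.mono fun y hy => hy.1
    refine measure_mono_null ?_ (ae_iff.1 h1)
    intro y hy
    have hd : dist y x < 1 - ‖x‖ := hy
    have hyx : ‖y‖ ≤ ‖x‖ + ‖y - x‖ := by simpa using norm_add_le x (y - x)
    rw [dist_eq_norm] at hd
    have : ‖y‖ < 1 := by linarith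
    exact ne_of_lt this
  exact absurd hnull hpos.ne'

end
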